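/- Define A_n(x,s) = n^{-1/2} Σ_{t=1}^n min(1, |x g(t-s)|) for x, s ∈ ℝ, where g satisfies g = 0 on (-∞,0] and |g(u)| ≤ u^γ for 0<u<1, |g(u)| ≤ u^{-α} for u ≥ 1, with β ∈ (0,2), αβ > 2, γ > -1/β. Then for q > 2 there is a constant C with ∫_0^1 x^{-1-β} (∫_0^n A_n(x,s)^q ds) dx ≤ C n^{1-q/2} for all n ≥ 1. -/

import Mathlib

open MeasureTheory Real Set Finset


lemma frac_piece (p : ℝ) (hp : -1 < p) (k : ℕ) :
    IntervalIntegrable (fun s => (1 - Int.fract s) ^ p) volume k (k+1) ∧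
    ∫ s in (k:ℝ)..(k+1:ℝ), (1 - Int.fract s) ^ p = 1 / (p + 1) := by
  have h1 : ∀ᵐ s : ℝ, s ≠ (k:ℝ) + 1 := by
    rw [ae_iff]
    have : {x : ℝ | ¬ x ≠ (k:ℝ)+1} = {(k:ℝ)+1} := by ext y; simp
    rw [this]; exact measure_singleton _
  have key : ∀ s : ℝ, s ∈ Set.uIoc (k:ℝ) ((k:ℝ)+1) → s ≠ (k:ℝ)+1 →
      (1 - Int.fract s) ^ p = ((k:ℝ) + 1 - s) ^ p := by
    intro s hs hne
    rw [Set.uIoc_of_le (by linarith : (k:ℝ) ≤ (k:ℝ)+1)] at hs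
    have hfl : ⌊s⌋ = (k : ℤ) := by
      apply Int.floor_eq_iff.mpr
      constructor
      · exact_mod_cast hs.1.le
      · push_cast; exact lt_of_le_of_ne hs.2 hne
    have h2 : Int.fract s = s - (k:ℝ) := by rw [Int.fract, hfl]; push_cast; ring
    rw [h2]; ring_nf
  have hae : (fun s : ℝ => (1 - Int.fract s) ^ p) =ᵐ[volume.restrict (Set.uIoc (k:ℝ) ((k:ℝ)+1))]
      (fun s => ((k:ℝ) + 1 - s) ^ p) := by
    filter_upwards [ae_restrict_mem measurableSet_uIoc, ae_restrict_of_ae h1] with s hs hne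
    exact key s hs hne
  have hint : IntervalIntegrable (fun s : ℝ => ((k:ℝ) + 1 - s) ^ p) volume k (k+1) := by
    have := (intervalIntegral.intervalIntegrable_rpow' hp (a := 0) (b := 1)).comp_sub_left ((k:ℝ)+1)
    simpa using this.symm
  constructor
  · exact hint.congr_ae hae.symm
  · have : ∫ s in (k:ℝ)..(k+1:ℝ), (1 - Int.fract s) ^ p
        = ∫ s in (k:ℝ)..(k+1:ℝ), ((k:ℝ) + 1 - s) ^ p := by
      apply intervalIntegral.integral_congr_ae
      filter_upwards [h1] with s hne hs
      exact key s hs hne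
    rw [this, intervalIntegral.integral_comp_sub_left (fun u => u ^ p) ((k:ℝ)+1)]
    simp only [add_sub_cancel_left, add_sub_cancel_right, sub_self]
    rw [integral_rpow (Or.inl hp), Real.one_rpow, Real.zero_rpow (by linarith)]
    ring

lemma frac_int (p : ℝ) (hp : -1 < p) (n : ℕ) :
    IntegrableOn (fun s => (1 - Int.fract s) ^ p) (Icc (0:ℝ) (n:ℝ)) volume ∧
    ∫ s in Icc (0:ℝ) (n:ℝ), (1 - Int.fract s) ^ p = n / (p+1) := by
  have hpieces : ∀ k : ℕ, IntervalIntegrable (fun s => (1 - Int.fract s)^p) volume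
      ((fun i : ℕ => (i:ℝ)) k) ((fun i : ℕ => (i:ℝ)) (k+1)) := by
    intro k
    have := (frac_piece p hp k).1
    simp only [Nat.cast_add, Nat.cast_one]
    exact this
  have II : IntervalIntegrable (fun s => (1 - Int.fract s)^p) volume 0 (n:ℝ) := by
    have := IntervalIntegrable.trans_iterate (a := fun i : ℕ => (i:ℝ)) (n := n)
      (fun k _ => hpieces k)
    simpa using this
  refine ⟨(intervalIntegrable_iff_integrableOn_Icc_of_le (by positivity)).mp II, ?_⟩
  rw [MeasureTheory.integral_Icc_eq_integral_Ioc,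
    ← intervalIntegral.integral_of_le (by positivity : (0:ℝ) ≤ (n:ℝ))]
  have hsum := intervalIntegral.sum_integral_adjacent_intervals (a := fun i : ℕ => (i:ℝ)) (n := n)
    (fun k _ => hpieces k)
  simp only [Nat.cast_zero] at hsum
  rw [← hsum]
  have : ∀ k ∈ Finset.range n, ∫ s in ((k:ℝ))..((k:ℝ)+1), (1 - Int.fract s)^p = 1/(p+1) := by
    intro k _; exact (frac_piece p hp k).2
  rw [Finset.sum_congr rfl (by intro k hk; push_cast; exact this k hk)]
  rw [Finset.sum_const, Finset.card_range]
  simp; ring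

lemma sum_bound (α γ : ℝ) (g : ℝ → ℝ) (hg0 : ∀ u ≤ (0:ℝ), g u = 0)
    (hg1 : ∀ u : ℝ, 0 < u → u < 1 → |g u| ≤ u ^ γ)
    (hg2 : ∀ u : ℝ, 1 ≤ u → |g u| ≤ u ^ (-α)) (hα : 1 < α)
    (x s : ℝ) (hx : 0 < x) (hs : 0 ≤ s) (n : ℕ) :
    ∑ t ∈ Finset.Icc 1 n, min 1 |x * g ((t:ℝ) - s)| ≤
      min 1 (x * (1 - Int.fract s) ^ γ) + x * (2 ^ α * ∑' j : ℕ, ((j:ℝ)+1) ^ (-α)) := by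
  have hζsum : Summable (fun j : ℕ => ((j:ℝ)+1) ^ (-α)) := by
    have h0 : Summable (fun j : ℕ => ((j:ℝ)) ^ (-α)) :=
      Real.summable_nat_rpow.mpr (by linarith)
    have h1 := (summable_nat_add_iff 1).mpr h0
    refine h1.congr fun j => ?_
    push_cast; ring_nf
  set ζ := ∑' j : ℕ, ((j:ℝ)+1) ^ (-α) with hζ
  have hζ0 : 0 ≤ ζ := tsum_nonneg fun j => by positivity
  set m : ℕ := ⌊s⌋.toNat with hmdef
  have hm : (m:ℝ) = (⌊s⌋ : ℝ) := by
    rw [hmdef]; exact_mod_cast congrArg (Int.cast : ℤ → ℝ)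
      (Int.toNat_of_nonneg (Int.floor_nonneg.mpr hs))
  have hms : (m:ℝ) ≤ s := by rw [hm]; exact Int.floor_le s
  set δ : ℝ := 1 - Int.fract s with hδdef
  have hδ0 : 0 < δ := by have := Int.fract_lt_one s; simp only [hδdef]; linarith
  have hδ1 : δ ≤ 1 := by have := Int.fract_nonneg s; simp only [hδdef]; linarith
  have hδm : δ = (m:ℝ) + 1 - s := by
    rw [hδdef, Int.fract, hm]; ring
  set M : ℝ := min 1 (x * δ ^ γ) with hMdef
  have hM0 : 0 ≤ M := le_min (by norm_num) (by positivity)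
  have hpt : ∀ t ∈ Finset.Icc 1 n, min 1 |x * g ((t:ℝ) - s)| ≤
      (if t = m+1 then M else 0) +
        x * 2 ^ α * (if s+1 ≤ (t:ℝ) then ((t:ℝ)-(m:ℝ)) ^ (-α) else 0) := by
    intro t _
    have hG2 : 0 ≤ x * 2 ^ α * (if s+1 ≤ (t:ℝ) then ((t:ℝ)-(m:ℝ)) ^ (-α) else 0) := by
      apply mul_nonneg (by positivity)
      split_ifs with h
      · exact Real.rpow_nonneg (by linarith) _
      · exact le_rfl
    have hG1 : 0 ≤ (if t = m+1 then M else 0) := by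
      split_ifs
      · exact hM0
      · exact le_rfl
    rcases le_or_gt (t:ℝ) s with hts | hts
    · have : g ((t:ℝ) - s) = 0 := hg0 _ (by linarith)
      rw [this, mul_zero, abs_zero, min_eq_right (by norm_num)]
      exact add_nonneg hG1 hG2
    · rcases lt_or_ge (t:ℝ) (s+1) with hts1 | hts1
      · have htm : t = m + 1 := by
          have h1 : (m:ℝ) < t := lt_of_le_of_lt hms hts
          have h2 : (t:ℝ) < (m:ℝ) + 2 := by
            have : s < (m:ℝ) + 1 := by
              have := Int.fract_lt_one s
              rw [Int.fract, ← hm] at this; linarith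
            linarith
          have h1' : m < t := by exact_mod_cast h1
          have h2' : t < m + 2 := by exact_mod_cast h2
          omega
        have hu : (t:ℝ) - s = δ := by rw [htm, hδm]; push_cast; ring
        have hδlt1 : δ < 1 := by
          rw [← hu]; linarith
        have hbd : min 1 |x * g ((t:ℝ) - s)| ≤ M := by
          rw [hMdef]
          apply min_le_min le_rfl
          rw [hu, abs_mul, abs_of_pos hx]
          exact mul_le_mul_of_nonneg_left (hg1 δ hδ0 hδlt1) hx.le
        rw [if_pos htm]
        exact le_add_of_le_of_nonneg hbd hG2
      · have hu1 : (1:ℝ) ≤ (t:ℝ) - s := by linarith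
        have hw1 : (1:ℝ) ≤ (t:ℝ) - (m:ℝ) := by linarith
        set u := (t:ℝ) - s with hudef
        set w := (t:ℝ) - (m:ℝ) with hwdef
        have huw : w / 2 ≤ u := by
          have hfr : s - (m:ℝ) < 1 := by
            have := Int.fract_lt_one s
            rw [Int.fract, ← hm] at this; linarith
          rcases le_or_gt w 2 with h | h
          · linarith
          · have : u > w - 1 := by rw [hudef, hwdef]; linarith
            linarith
        have hstep : u ^ (-α) ≤ 2 ^ α * w ^ (-α) := by
          have h1 : u ^ (-α) ≤ (w/2) ^ (-α) :=
            Real.rpow_le_rpow_of_nonpos (by linarith) huw (by linarith)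
          have h2 : (w/2 : ℝ) ^ (-α) = 2 ^ α * w ^ (-α) := by
            rw [Real.div_rpow (by linarith) (by norm_num), Real.rpow_neg (by norm_num : (0:ℝ) ≤ 2)]
            field_simp
          linarith
        have hbd : min 1 |x * g u| ≤ x * 2 ^ α * w ^ (-α) := by
          calc min 1 |x * g u| ≤ |x * g u| := min_le_right _ _
            _ = x * |g u| := by rw [abs_mul, abs_of_pos hx]
            _ ≤ x * (u ^ (-α)) := mul_le_mul_of_nonneg_left (hg2 u hu1) hx.le
            _ ≤ x * (2 ^ α * w ^ (-α)) := mul_le_mul_of_nonneg_left hstep hx.le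
            _ = x * 2 ^ α * w ^ (-α) := by ring
        rw [if_pos hts1]
        exact le_add_of_nonneg_of_le hG1 hbd
  refine (Finset.sum_le_sum hpt).trans ?_
  rw [Finset.sum_add_distrib, ← Finset.mul_sum]
  have hfirst : (∑ t ∈ Finset.Icc 1 n, if t = m+1 then M else 0) ≤ M := by
    rw [Finset.sum_ite_eq' (Finset.Icc 1 n) (m+1) (fun _ => M)]
    split_ifs <;> simp [hM0]
  have hsecond : (∑ t ∈ Finset.Icc 1 n, if s+1 ≤ (t:ℝ) then ((t:ℝ)-(m:ℝ)) ^ (-α) else 0) ≤ ζ := by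
    rw [← Finset.sum_filter]
    set T := (Finset.Icc 1 n).filter (fun t : ℕ => s+1 ≤ (t:ℝ)) with hT
    have hTm : ∀ t ∈ T, m + 1 ≤ t := by
      intro t ht
      have := (Finset.mem_filter.mp ht).2
      have : (m:ℝ) + 1 ≤ (t:ℝ) := by linarith
      exact_mod_cast this
    have heq : ∀ t ∈ T, ((t:ℝ)-(m:ℝ)) ^ (-α) = (((t - (m+1) : ℕ):ℝ)+1) ^ (-α) := by
      intro t ht
      congr 1
      rw [Nat.cast_sub (hTm t ht)]
      push_cast; ring
    rw [Finset.sum_congr rfl heq]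
    have hinj : ∀ a ∈ T, ∀ b ∈ T, a - (m+1) = b - (m+1) → a = b := by
      intro a ha b hb hab
      have h1 := hTm a ha; have h2 := hTm b hb; omega
    have himg := Finset.sum_image (s := T) (g := fun t : ℕ => t - (m+1))
      (f := fun j : ℕ => ((j:ℝ)+1) ^ (-α)) hinj
    rw [← himg]
    exact Summable.sum_le_tsum _ (fun j _ => by positivity) hζsum
  calc _ ≤ M + x * 2 ^ α * ζ :=
        add_le_add hfirst (mul_le_mul_of_nonneg_left hsecond (by positivity))
    _ = M + x * (2 ^ α * ζ) := by ring

lemma aux_add_rpow {a b q : ℝ} (ha : 0 ≤ a) (hb : 0 ≤ b) (hq : 0 ≤ q) :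
    (a + b) ^ q ≤ 2 ^ q * (a ^ q + b ^ q) := by
  have h1 : a + b ≤ 2 * max a b := by
    rcases max_cases a b with ⟨h, h'⟩ | ⟨h, h'⟩ <;> rw [h] <;> linarith
  have h2 : (a + b) ^ q ≤ (2 * max a b) ^ q :=
    Real.rpow_le_rpow (by linarith) h1 hq
  have h3 : (2 * max a b) ^ q = 2 ^ q * (max a b) ^ q :=
    Real.mul_rpow (by norm_num) (le_max_of_le_left ha)
  have h4 : (max a b) ^ q ≤ a ^ q + b ^ q := by
    rcases max_cases a b with ⟨h, h'⟩ | ⟨h, h'⟩ <;> rw [h]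
    · have := Real.rpow_nonneg hb q; linarith
    · have := Real.rpow_nonneg ha q; linarith
  calc (a + b) ^ q ≤ 2 ^ q * (max a b) ^ q := by rw [← h3]; exact h2
    _ ≤ 2 ^ q * (a ^ q + b ^ q) := by
        have h20 : (0:ℝ) ≤ 2 ^ q := Real.rpow_nonneg (by norm_num) q
        exact mul_le_mul_of_nonneg_left h4 h20

lemma min_rpow_le {x δ γ β' q : ℝ} (hx : 0 < x) (hδ : 0 < δ) (hβ'0 : 0 ≤ β') (hβ'q : β' ≤ q) :
    (min 1 (x * δ ^ γ)) ^ q ≤ x ^ β' * δ ^ (γ * β') := by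
  have hu : 0 < x * δ ^ γ := by positivity
  have hrw : x ^ β' * δ ^ (γ * β') = (x * δ ^ γ) ^ β' := by
    rw [Real.mul_rpow hx.le (by positivity), Real.rpow_mul hδ.le]
  rcases le_or_gt (x * δ ^ γ) 1 with h | h
  · rw [min_eq_right h, hrw]
    exact Real.rpow_le_rpow_of_exponent_ge hu h hβ'q
  · rw [min_eq_left h.le, Real.one_rpow, hrw]
    calc (1:ℝ) = 1 ^ β' := (Real.one_rpow β').symm
      _ ≤ (x * δ ^ γ) ^ β' := Real.rpow_le_rpow (by norm_num) h.le hβ'0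

theorem stmt_10 (α β γ q : ℝ) (hβ : 0 < β) (hβ2 : β < 2) (hαβ : 2 < α * β)
    (hγ : -1 / β < γ) (hq : 2 < q) (g : ℝ → ℝ) (hg0 : ∀ u ≤ (0:ℝ), g u = 0)
    (hg1 : ∀ u : ℝ, 0 < u → u < 1 → |g u| ≤ u ^ γ)
    (hg2 : ∀ u : ℝ, 1 ≤ u → |g u| ≤ u ^ (-α)) :
    ∃ C : ℝ, ∀ n : ℕ, 1 ≤ n →
      (∫ x in Ioo (0:ℝ) 1, x ^ (-1 - β) *
          ∫ s in Icc (0:ℝ) (n : ℝ),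
            ((n : ℝ) ^ (-(1/2 : ℝ)) *
              ∑ t ∈ Finset.Icc 1 n, min 1 |x * g ((t : ℝ) - s)|) ^ q) ≤
        C * (n : ℝ) ^ (1 - q / 2) := by
  have hα1 : 1 < α := by nlinarith
  have hq0 : (0:ℝ) ≤ q := by linarith
  obtain ⟨β', hββ', hβ'q, hp1, hβ'0⟩ :
      ∃ β', β < β' ∧ β' < q ∧ -1 < γ * β' ∧ 0 < β' := by
    rcases le_or_gt 0 γ with h | h
    · exact ⟨(β + q) / 2, by linarith, by linarith, by nlinarith, by linarith⟩
    · have hγβ : -1 < γ * β := by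
        have := (div_lt_iff₀ hβ).mp hγ
        linarith
      have hβγinv : β < -1 / γ := by
        rw [lt_div_iff_of_neg h]
        linarith
      have h1 : β < min q (-1 / γ) := lt_min (by linarith) hβγinv
      refine ⟨(β + min q (-1 / γ)) / 2, by linarith, ?_, ?_, by linarith⟩
      · have := min_le_left q (-1/γ); linarith
      · have h2 : (β + min q (-1 / γ)) / 2 < -1 / γ := by
          have := min_le_right q (-1/γ); linarith
        have hkey : γ * (-1 / γ) = -1 := by
          field_simp
          rw [div_self (ne_of_lt h)]
        have := mul_lt_mul_of_neg_left h2 h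
        rw [hkey] at this
        linarith
  set p := γ * β' with hpdef
  set ζ := ∑' j : ℕ, ((j:ℝ) + 1) ^ (-α) with hζdef
  have hζ0 : 0 ≤ ζ := tsum_nonneg fun j => by positivity
  set K := 2 ^ α * ζ with hKdef
  have hK0 : 0 ≤ K := by positivity
  set I1 := ∫ x in Ioo (0:ℝ) 1, x ^ (β' - 1 - β) with hI1def
  set I2 := ∫ x in Ioo (0:ℝ) 1, x ^ (q - 1 - β) with hI2def
  refine ⟨2 ^ q * (I1 / (p + 1) + K ^ q * I2), ?_⟩
  intro n hn
  have hn0 : (0:ℝ) < n := by exact_mod_cast hn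
  set ν := (n:ℝ) ^ (-(1/2 : ℝ)) with hνdef
  have hν0 : 0 ≤ ν := Real.rpow_nonneg hn0.le _
  -- integrability on (0,1) of the power functions
  have hpow : ∀ r : ℝ, -1 < r → IntegrableOn (fun x : ℝ => x ^ r) (Ioo (0:ℝ) 1) volume := by
    intro r hr
    have h := intervalIntegral.intervalIntegrable_rpow' hr (a := (0:ℝ)) (b := 1)
    rw [intervalIntegrable_iff_integrableOn_Ioo_of_le (by norm_num)] at h
    exact h
  have hS0 : ∀ x s : ℝ, 0 ≤ ∑ t ∈ Finset.Icc 1 n, min 1 |x * g ((t : ℝ) - s)| :=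
    fun x s => Finset.sum_nonneg fun t _ => le_min zero_le_one (abs_nonneg _)
  -- inner bound
  have hinner : ∀ x ∈ Ioo (0:ℝ) 1,
      (∫ s in Icc (0:ℝ) (n : ℝ),
        (ν * ∑ t ∈ Finset.Icc 1 n, min 1 |x * g ((t : ℝ) - s)|) ^ q)
      ≤ (ν ^ q * 2 ^ q * x ^ β') * ((n:ℝ) / (p + 1)) + (ν ^ q * 2 ^ q * x ^ q * K ^ q) * n := by
    intro x hx
    obtain ⟨hfi, hfv⟩ := frac_int p hp1 n
    set c := ν ^ q * 2 ^ q * x ^ β' with hcdef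
    set c' := ν ^ q * 2 ^ q * x ^ q * K ^ q with hc'def
    have hintd : IntegrableOn (fun s : ℝ => c * (1 - Int.fract s) ^ p + c') (Icc (0:ℝ) (n:ℝ))
        volume := (hfi.const_mul c).add
      ((integrableOn_const_iff).mpr (Or.inr (by rw [Real.volume_Icc]; exact ENNReal.ofReal_lt_top)))
    have hdval : ∫ s in Icc (0:ℝ) (n:ℝ), (c * (1 - Int.fract s) ^ p + c')
        = c * ((n:ℝ) / (p + 1)) + c' * n := by
      rw [integral_add (hfi.const_mul c)
        ((integrableOn_const_iff).mpr (Or.inr (by rw [Real.volume_Icc]; exact ENNReal.ofReal_lt_top)))]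
      rw [integral_const_mul, hfv, setIntegral_const]
      rw [Real.volume_real_Icc_of_le (by linarith), smul_eq_mul]
      ring
    rw [← hdval]
    apply integral_mono_of_nonneg
    · filter_upwards with s
      exact Real.rpow_nonneg (mul_nonneg hν0 (hS0 x s)) q
    · exact hintd
    · filter_upwards [ae_restrict_mem measurableSet_Icc] with s hsmem
      have hsb := sum_bound α γ g hg0 hg1 hg2 hα1 x s hx.1 hsmem.1 n
      set S := ∑ t ∈ Finset.Icc 1 n, min 1 |x * g ((t : ℝ) - s)| with hSdef
      set δ := 1 - Int.fract s with hδdef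
      have hδ0 : 0 < δ := by have := Int.fract_lt_one s; rw [hδdef]; linarith
      have hM0 : 0 ≤ min 1 (x * δ ^ γ) := le_min zero_le_one (mul_nonneg hx.1.le (Real.rpow_nonneg hδ0.le γ))
      have hxK0 : 0 ≤ x * K := mul_nonneg hx.1.le hK0
      calc (ν * S) ^ q = ν ^ q * S ^ q := Real.mul_rpow hν0 (hS0 x s)
        _ ≤ ν ^ q * (min 1 (x * δ ^ γ) + x * K) ^ q := by
            apply mul_le_mul_of_nonneg_left _ (Real.rpow_nonneg hν0 q)
            exact Real.rpow_le_rpow (hS0 x s) hsb hq0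
        _ ≤ ν ^ q * (2 ^ q * ((min 1 (x * δ ^ γ)) ^ q + (x * K) ^ q)) := by
            apply mul_le_mul_of_nonneg_left _ (Real.rpow_nonneg hν0 q)
            exact aux_add_rpow hM0 hxK0 hq0
        _ ≤ ν ^ q * (2 ^ q * (x ^ β' * δ ^ p + x ^ q * K ^ q)) := by
            apply mul_le_mul_of_nonneg_left _ (Real.rpow_nonneg hν0 q)
            apply mul_le_mul_of_nonneg_left _ (Real.rpow_nonneg (by norm_num) q)
            apply add_le_add
            · exact min_rpow_le hx.1 hδ0 hβ'0.le hβ'q.le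
            · rw [Real.mul_rpow hx.1.le hK0]
        _ = c * δ ^ p + c' := by rw [hcdef, hc'def]; ring
  -- outer dominating function
  set a1 := ν ^ q * 2 ^ q * ((n:ℝ) / (p + 1)) with ha1def
  set a2 := ν ^ q * 2 ^ q * K ^ q * n with ha2def
  have heqOn : EqOn (fun x : ℝ => a1 * x ^ (β' - 1 - β) + a2 * x ^ (q - 1 - β))
      (fun x : ℝ => x ^ (-1 - β) *
        ((ν ^ q * 2 ^ q * x ^ β') * ((n:ℝ) / (p + 1)) + (ν ^ q * 2 ^ q * x ^ q * K ^ q) * n))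
      (Ioo (0:ℝ) 1) := by
    intro x hx
    have e1 : x ^ (β' - 1 - β) = x ^ (-1 - β) * x ^ β' := by
      rw [← Real.rpow_add hx.1]; congr 1; ring
    have e2 : x ^ (q - 1 - β) = x ^ (-1 - β) * x ^ q := by
      rw [← Real.rpow_add hx.1]; congr 1; ring
    simp only [e1, e2, ha1def, ha2def]
    ring
  have hdomInt : IntegrableOn (fun x : ℝ => x ^ (-1 - β) *
      ((ν ^ q * 2 ^ q * x ^ β') * ((n:ℝ) / (p + 1)) + (ν ^ q * 2 ^ q * x ^ q * K ^ q) * n))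
      (Ioo (0:ℝ) 1) volume := by
    apply IntegrableOn.congr_fun _ heqOn measurableSet_Ioo
    exact ((hpow _ (by linarith)).const_mul a1).add ((hpow _ (by linarith)).const_mul a2)
  have hmain : (∫ x in Ioo (0:ℝ) 1, x ^ (-1 - β) *
          ∫ s in Icc (0:ℝ) (n : ℝ),
            (ν * ∑ t ∈ Finset.Icc 1 n, min 1 |x * g ((t : ℝ) - s)|) ^ q)
      ≤ ∫ x in Ioo (0:ℝ) 1, x ^ (-1 - β) *
          ((ν ^ q * 2 ^ q * x ^ β') * ((n:ℝ) / (p + 1)) + (ν ^ q * 2 ^ q * x ^ q * K ^ q) * n) := by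
    apply integral_mono_of_nonneg
    · filter_upwards [ae_restrict_mem measurableSet_Ioo] with x hx
      exact mul_nonneg (Real.rpow_nonneg hx.1.le _)
        (integral_nonneg fun s => Real.rpow_nonneg (mul_nonneg hν0 (hS0 x s)) q)
    · exact hdomInt
    · filter_upwards [ae_restrict_mem measurableSet_Ioo] with x hx
      exact mul_le_mul_of_nonneg_left (hinner x hx) (Real.rpow_nonneg hx.1.le _)
  have hdomVal : (∫ x in Ioo (0:ℝ) 1, x ^ (-1 - β) *
          ((ν ^ q * 2 ^ q * x ^ β') * ((n:ℝ) / (p + 1)) + (ν ^ q * 2 ^ q * x ^ q * K ^ q) * n))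
      = a1 * I1 + a2 * I2 := by
    rw [← setIntegral_congr_fun measurableSet_Ioo heqOn]
    rw [integral_add ((hpow _ (by linarith)).const_mul a1) ((hpow _ (by linarith)).const_mul a2)]
    rw [integral_const_mul, integral_const_mul]
  have hνn : ν ^ q * (n:ℝ) = (n:ℝ) ^ (1 - q / 2) := by
    rw [hνdef, ← Real.rpow_mul hn0.le]
    nth_rewrite 2 [← Real.rpow_one (n:ℝ)]
    rw [← Real.rpow_add hn0]
    congr 1; ring
  calc (∫ x in Ioo (0:ℝ) 1, x ^ (-1 - β) *
          ∫ s in Icc (0:ℝ) (n : ℝ),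
            (ν * ∑ t ∈ Finset.Icc 1 n, min 1 |x * g ((t : ℝ) - s)|) ^ q)
      ≤ a1 * I1 + a2 * I2 := by rw [← hdomVal]; exact hmain
    _ = 2 ^ q * (I1 / (p + 1) + K ^ q * I2) * (ν ^ q * n) := by
        rw [ha1def, ha2def]; ring
    _ = 2 ^ q * (I1 / (p + 1) + K ^ q * I2) * (n:ℝ) ^ (1 - q / 2) := by rw [hνn]
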